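/- Let G be a finite group. Then the intersection of the normalizers of all self-normalizing subgroups of G equals the hypercenter Z_∞(G) of G. That is, ⋂_{H ≤ G, N_G(H) = H} N_G(H) = Z_∞(G). -/

import Mathlib

open Subgroup

universe u

section Aux

/-- The intersection of the normalizers of all self-normalizing subgroups. -/
private def sni (G : Type u) [Group G] : Subgroup G :=
  ⨅ H ∈ {H : Subgroup G | Subgroup.normalizer (H : Set G) = H}, Subgroup.normalizer ((H : Subgroup G) : Set G)

variable {G : Type u} [Group G]

private lemma mem_sni {x : G} :
    x ∈ sni G ↔ ∀ H : Subgroup G, normalizer (H : Set _) = H → x ∈ normalizer (H : Set _) := by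
  simp [sni, Subgroup.mem_iInf]

private lemma sni_le {H : Subgroup G} (hH : normalizer (H : Set _) = H) : sni G ≤ H := by
  intro x hx
  have := mem_sni.mp hx H hH
  rwa [hH] at this

private lemma sni_normal : (sni G).Normal := by
  constructor
  intro x hx g
  rw [mem_sni]
  intro H hH
  rw [hH]
  have h0 : normalizer ((Subgroup.map (MulAut.conj g⁻¹).toMonoidHom H : Subgroup G) : Set G)
      = Subgroup.map (MulAut.conj g⁻¹).toMonoidHom H := by
    rw [← Subgroup.map_equiv_normalizer_eq, hH]
  have hx' := mem_sni.mp hx _ h0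
  rw [h0, Subgroup.mem_map_equiv] at hx'
  simpa using hx'

private lemma ucs_le_of_selfnorm (H : Subgroup G) (hH : normalizer (H : Set _) = H) :
    ∀ n, Subgroup.upperCentralSeries G n ≤ H
  | 0 => by rw [Subgroup.upperCentralSeries_zero]; exact bot_le
  | (n+1) => by
    intro x hx
    rw [← hH, Subgroup.mem_normalizer_iff]
    intro h
    constructor
    · intro hh
      have hc := Subgroup.mem_upperCentralSeries_succ_iff.mp hx h
      have he : x * h * x⁻¹ = (x * h * x⁻¹ * h⁻¹) * h := by group
      rw [he]
      exact H.mul_mem (ucs_le_of_selfnorm H hH n hc) hh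
    · intro hh
      have hx' : x⁻¹ ∈ Subgroup.upperCentralSeries G (n+1) := inv_mem hx
      have hc := Subgroup.mem_upperCentralSeries_succ_iff.mp hx' (x * h * x⁻¹)
      have he : h = (x⁻¹ * (x * h * x⁻¹) * x⁻¹⁻¹ * (x * h * x⁻¹)⁻¹) * (x * h * x⁻¹) := by
        group
      rw [he]
      exact H.mul_mem (ucs_le_of_selfnorm H hH n hc) hh

private lemma comap_selfnorm (N : Subgroup G) [N.Normal]
    (H : Subgroup (G ⧸ N)) (hH : normalizer (H : Set _) = H) :
    normalizer ((comap (QuotientGroup.mk' N) H : Subgroup G) : Set G) = comap (QuotientGroup.mk' N) H := by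
  refine le_antisymm ?_ le_normalizer
  intro g hg
  have hg' : (QuotientGroup.mk' N) g ∈ normalizer (H : Set _) := by
    rw [Subgroup.mem_normalizer_iff]
    intro nb
    obtain ⟨m, rfl⟩ := QuotientGroup.mk'_surjective N nb
    have := Subgroup.mem_normalizer_iff.mp hg m
    simpa [Subgroup.mem_comap] using this
  rw [hH] at hg'
  exact Subgroup.mem_comap.mpr hg'

private lemma sni_eq_bot [Finite G] (hZ : Subgroup.center G = ⊥) : sni G = ⊥ := by
  by_contra hK
  haveI : (sni G).Normal := sni_normal
  haveI : Nontrivial (sni G) := (sni G).bot_or_nontrivial.resolve_left hK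
  have hcard : 1 < Nat.card (sni G) := Finite.one_lt_card
  set p := (Nat.card (sni G)).minFac with hp_def
  have hp : p.Prime := Nat.minFac_prime (by omega)
  haveI : Fact p.Prime := ⟨hp⟩
  obtain ⟨P⟩ : Nonempty (Sylow p (sni G)) := inferInstance
  set K : Subgroup G := sni G with hKdef
  set P' : Subgroup G := Subgroup.map K.subtype (P : Subgroup K) with hP'def
  have hP'K : P' ≤ K := by
    rintro x ⟨a, _, rfl⟩
    exact a.2
  have hP'p : IsPGroup p P' := P.isPGroup'.map _
  have hcardP' : Nat.card P' = Nat.card (P : Subgroup K) :=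
    (Nat.card_congr (Subgroup.equivMapOfInjective _ K.subtype K.subtype_injective).toEquiv).symm
  have hpP : p ∣ Nat.card P' := by
    rw [hcardP', Sylow.card_eq_multiplicity]
    refine dvd_pow_self p ?_
    have h0 : Nat.card K ≠ 0 := Nat.card_pos.ne'
    exact (hp.factorization_pos_of_dvd h0 (Nat.minFac_dvd _)).ne'
  -- maximality of P' among p-subgroups of K
  have hmax : ∀ W : Subgroup G, W ≤ K → IsPGroup p W → P' ≤ W → W = P' := by
    intro W hWK hWp hP'W
    have hW' : IsPGroup p (W.subgroupOf K) :=
      hWp.of_equiv (Subgroup.subgroupOfEquivOfLe hWK).symm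
    have hPW' : (P : Subgroup K) ≤ W.subgroupOf K := by
      intro x hx
      exact Subgroup.mem_subgroupOf.mpr (hP'W (Subgroup.mem_map.mpr ⟨x, hx, rfl⟩))
    have hWeq : W.subgroupOf K = (P : Subgroup K) := P.3 hW' hPW'
    calc W = W ⊓ K := (inf_of_le_left hWK).symm
    _ = (W.subgroupOf K).map K.subtype := (Subgroup.subgroupOf_map_subtype W K).symm
    _ = P' := by rw [hWeq]
  -- conjugates of P' landing in its normalizer are equal to P'
  have hconj : ∀ g : G, Subgroup.map (MulAut.conj g).toMonoidHom P' ≤ normalizer (P' : Set G) →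
      Subgroup.map (MulAut.conj g).toMonoidHom P' = P' := by
    intro g hle
    have hP''p : IsPGroup p (Subgroup.map (MulAut.conj g).toMonoidHom P') := hP'p.map _
    have hP''K : Subgroup.map (MulAut.conj g).toMonoidHom P' ≤ K := by
      rintro x ⟨a, ha, rfl⟩
      simpa using ‹K.Normal›.conj_mem a (hP'K ha) g
    have hW : IsPGroup p (P' ⊔ Subgroup.map (MulAut.conj g).toMonoidHom P' : Subgroup G) :=
      IsPGroup.to_sup_of_normal_left' hP'p hP''p hle
    have hsup := hmax _ (sup_le hP'K hP''K) hW le_sup_left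
    have hPP : Subgroup.map (MulAut.conj g).toMonoidHom P' ≤ P' := le_sup_right.trans hsup.le
    have hcards : Nat.card P' ≤ Nat.card (Subgroup.map (MulAut.conj g).toMonoidHom P') :=
      (Nat.card_congr (Subgroup.equivMapOfInjective P' _ (MulAut.conj g).injective).toEquiv).le
    exact Subgroup.eq_of_le_of_card_ge hPP hcards
  -- the normalizer of P' is self-normalizing
  have hHsn : normalizer (normalizer (P' : Set G) : Set G) = normalizer (P' : Set G) := by
    refine le_antisymm ?_ le_normalizer
    intro g hg
    have hle : Subgroup.map (MulAut.conj g).toMonoidHom P' ≤ normalizer (P' : Set G) := by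
      rintro x ⟨a, ha, rfl⟩
      have haH : a ∈ normalizer (P' : Set G) := le_normalizer ha
      simpa using (Subgroup.mem_normalizer_iff.mp hg a).mp haH
    have heq := hconj g hle
    rw [Subgroup.mem_normalizer_iff]
    intro h
    constructor
    · intro hh
      have hmem : (MulAut.conj g).toMonoidHom h ∈
          Subgroup.map (MulAut.conj g).toMonoidHom P' := Subgroup.mem_map_of_mem _ hh
      rw [heq] at hmem
      simpa using hmem
    · intro hh
      rw [← heq] at hh
      obtain ⟨x, hx, hxe⟩ := hh
      have h2 : g * x * g⁻¹ = g * h * g⁻¹ := by simpa using hxe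
      have h3 : x = h := mul_left_cancel (mul_right_cancel h2)
      exact h3 ▸ hx
  have hKH : K ≤ normalizer (P' : Set G) := sni_le hHsn
  -- P' is normal in G
  have hP'N : P'.Normal := by
    constructor
    intro a ha g
    have hle : Subgroup.map (MulAut.conj g).toMonoidHom P' ≤ normalizer (P' : Set G) := by
      rintro x ⟨b, hb, rfl⟩
      have : g * b * g⁻¹ ∈ K := ‹K.Normal›.conj_mem b (hP'K hb) g
      simpa using hKH this
    have heq := hconj g hle
    have hmem : (MulAut.conj g).toMonoidHom a ∈
        Subgroup.map (MulAut.conj g).toMonoidHom P' := Subgroup.mem_map_of_mem _ ha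
    rw [heq] at hmem
    simpa using hmem
  -- every Sylow q-subgroup for q ≠ p centralizes P'
  have hcent : ∀ (q : ℕ), q.Prime → q ≠ p → ∀ (Q : Sylow q G),
      (Q : Subgroup G) ≤ Subgroup.centralizer (P' : Set G) := by
    intro q hq hqp Q
    haveI : Fact q.Prime := ⟨hq⟩
    have hKQ : K ≤ normalizer ((Q : Subgroup G) : Set G) := sni_le (Sylow.normalizer_normalizer Q)
    intro b hb
    rw [Subgroup.mem_centralizer_iff]
    intro a ha
    have haP : a ∈ P' := ha
    have haN : a ∈ normalizer ((Q : Subgroup G) : Set G) := hKQ (hP'K haP)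
    have hc1 : a * b⁻¹ * a⁻¹ ∈ (Q : Subgroup G) :=
      (Subgroup.mem_normalizer_iff.mp haN b⁻¹).mp (inv_mem hb)
    have hcQ : b * (a * b⁻¹ * a⁻¹) ∈ (Q : Subgroup G) := mul_mem hb hc1
    have hcP : b * a * b⁻¹ * a⁻¹ ∈ P' := mul_mem (hP'N.conj_mem a haP b) (inv_mem haP)
    have hmem : b * a * b⁻¹ * a⁻¹ ∈ P' ⊓ (Q : Subgroup G) :=
      ⟨hcP, by rw [show b * a * b⁻¹ * a⁻¹ = b * (a * b⁻¹ * a⁻¹) by group]; exact hcQ⟩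
    have hbotQ : P' ⊓ (Q : Subgroup G) = ⊥ := by
      have h1 : Nat.card (P' ⊓ (Q : Subgroup G) : Subgroup G) ∣ Nat.card P' :=
        Subgroup.card_dvd_of_le inf_le_left
      have h2 : Nat.card (P' ⊓ (Q : Subgroup G) : Subgroup G) ∣ Nat.card (Q : Subgroup G) :=
        Subgroup.card_dvd_of_le inf_le_right
      have hcop : Nat.Coprime (Nat.card P') (Nat.card (Q : Subgroup G)) :=
        IsPGroup.coprime_card_of_ne p q (Ne.symm hqp) _ _ hP'p Q.isPGroup'
      rw [← Subgroup.card_eq_one]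
      exact Nat.dvd_one.mp (hcop ▸ Nat.dvd_gcd h1 h2)
    rw [hbotQ, Subgroup.mem_bot] at hmem
    have hba : b * a = a * b := by
      rw [show b * a * b⁻¹ * a⁻¹ = (b * a) * (a * b)⁻¹ by group] at hmem
      exact mul_inv_eq_one.mp hmem
    exact hba.symm
  -- a Sylow p-subgroup containing P', and the key generation fact
  obtain ⟨S, hP'S⟩ := hP'p.exists_le_sylow
  have hT : Subgroup.centralizer (P' : Set G) ⊔ (S : Subgroup G) = ⊤ := by
    rw [← Subgroup.index_eq_one, Nat.eq_one_iff_not_exists_prime_dvd]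
    intro q hq hdvd
    haveI : Fact q.Prime := ⟨hq⟩
    by_cases hqp : q = p
    · subst hqp
      haveI : (S : Subgroup G).FiniteIndex := ⟨Subgroup.index_ne_zero_of_finite⟩
      exact Sylow.not_dvd_index S
        (hdvd.trans (Subgroup.index_dvd_of_le le_sup_right))
    · obtain ⟨Q⟩ : Nonempty (Sylow q G) := inferInstance
      haveI : (Q : Subgroup G).FiniteIndex := ⟨Subgroup.index_ne_zero_of_finite⟩
      refine Sylow.not_dvd_index Q (hdvd.trans (Subgroup.index_dvd_of_le ?_))
      exact (hcent q hq hqp Q).trans le_sup_left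
  -- conjugation action of S on P' has a nontrivial fixed point
  letI : MulAction S P' :=
    { smul := fun s x => ⟨(s : G) * x * (s : G)⁻¹, hP'N.conj_mem _ x.2 _⟩
      one_smul := fun x => by
        apply Subtype.ext
        show ((1 : S) : G) * x * ((1 : S) : G)⁻¹ = (x : G)
        simp
      mul_smul := fun s t x => by
        apply Subtype.ext
        show ((s * t : S) : G) * x * ((s * t : S) : G)⁻¹
            = (s : G) * ((t : G) * x * (t : G)⁻¹) * (s : G)⁻¹
        push_cast
        group }
  have hfix1 : (1 : P') ∈ MulAction.fixedPoints S P' := by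
    rw [MulAction.mem_fixedPoints]
    intro s
    apply Subtype.ext
    show (s : G) * ((1 : P') : G) * (s : G)⁻¹ = ((1 : P') : G)
    simp
  obtain ⟨b, hbfix, hb1⟩ :=
    S.isPGroup'.exists_fixed_point_of_prime_dvd_card_of_fixed_point (α := P') hpP hfix1
  have hbc : (b : G) ∈ Subgroup.center G := by
    rw [Subgroup.mem_center_iff]
    intro g
    have hgT : g ∈ Subgroup.centralizer (P' : Set G) ⊔ (S : Subgroup G) := by
      rw [hT]; exact Subgroup.mem_top g
    have hle : Subgroup.centralizer (P' : Set G) ⊔ (S : Subgroup G)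
        ≤ Subgroup.centralizer {(b : G)} := by
      apply sup_le
      · exact Subgroup.centralizer_le (by
          intro x hx
          rw [Set.mem_singleton_iff] at hx
          subst hx
          exact b.2)
      · intro s hs
        rw [Subgroup.mem_centralizer_iff]
        intro h hh
        rw [Set.mem_singleton_iff] at hh
        subst hh
        have hfb := MulAction.mem_fixedPoints.mp hbfix ⟨s, hs⟩
        have h2 : s * (b : G) * s⁻¹ = (b : G) := congrArg Subtype.val hfb
        calc (b : G) * s = (s * (b : G) * s⁻¹) * s := by rw [h2]
        _ = s * (b : G) := by group
    have hgc := hle hgT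
    exact (Subgroup.mem_centralizer_iff.mp hgc (b : G) (Set.mem_singleton _)).symm
  rw [hZ, Subgroup.mem_bot] at hbc
  exact hb1 (Subtype.ext (by simpa using hbc.symm))

private lemma sni_le_ucs :
    ∀ (n : ℕ) (G : Type u) (_ : Group G) (_ : Finite G), Nat.card G ≤ n →
      sni G ≤ Subgroup.upperCentralSeries G (Nat.card G) := by
  intro n
  induction n with
  | zero =>
    intro G _ _ h
    have : 0 < Nat.card G := Nat.card_pos
    omega
  | succ n ih =>
    intro G _ _ hle
    by_cases hZ : Subgroup.center G = ⊥
    · rw [sni_eq_bot hZ]; exact bot_le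
    · haveI : Nontrivial (Subgroup.center G) :=
        (Subgroup.center G).bot_or_nontrivial.resolve_left hZ
      have hcZ : 1 < Nat.card (Subgroup.center G) := Finite.one_lt_card
      have hcard : Nat.card G
          = Nat.card (G ⧸ Subgroup.center G) * Nat.card (Subgroup.center G) :=
        Subgroup.card_eq_card_quotient_mul_card_subgroup _
      have hq0 : 0 < Nat.card (G ⧸ Subgroup.center G) := Nat.card_pos
      have hQlt : Nat.card (G ⧸ Subgroup.center G) < Nat.card G := by
        calc Nat.card (G ⧸ Subgroup.center G)
            < Nat.card (G ⧸ Subgroup.center G) * Nat.card (Subgroup.center G) := by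
              exact lt_mul_of_one_lt_right hq0 hcZ
        _ = Nat.card G := hcard.symm
      have hIH := ih (G ⧸ Subgroup.center G) inferInstance inferInstance (by omega)
      have hmaple : sni G ≤
          Subgroup.comap (QuotientGroup.mk' (Subgroup.center G)) (sni (G ⧸ Subgroup.center G)) := by
        intro x hx
        rw [Subgroup.mem_comap, mem_sni]
        intro H hH
        rw [hH]
        have hsn := comap_selfnorm (Subgroup.center G) H hH
        have hx' := mem_sni.mp hx _ hsn
        rw [hsn] at hx'
        exact Subgroup.mem_comap.mp hx'
      calc sni G ≤ _ := hmaple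
      _ ≤ Subgroup.comap (QuotientGroup.mk' (Subgroup.center G))
            (Subgroup.upperCentralSeries (G ⧸ Subgroup.center G)
              (Nat.card (G ⧸ Subgroup.center G))) := Subgroup.comap_mono hIH
      _ = Subgroup.upperCentralSeries G (Nat.card (G ⧸ Subgroup.center G) + 1) :=
        Subgroup.comap_upperCentralSeries_quotient_center _
      _ ≤ Subgroup.upperCentralSeries G (Nat.card G) := Subgroup.upperCentralSeries_mono _ (by omega)

end Aux

theorem intersection_selfNormalizing_eq_hypercenter
    (G : Type*) [Group G] [Finite G] :
    (⨅ H ∈ {H : Subgroup G | Subgroup.normalizer (H : Set G) = H}, Subgroup.normalizer ((H : Subgroup G) : Set G)) =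
      ⨆ n, _root_.upperCentralSeries G n := by
  apply le_antisymm
  · have h := sni_le_ucs (Nat.card G) G ‹_› ‹_› le_rfl
    exact h.trans (le_iSup (_root_.upperCentralSeries G) (Nat.card G))
  · apply iSup_le
    intro n
    refine le_iInf fun H => le_iInf fun hH => ?_
    have : _root_.upperCentralSeries G n ≤ H := ucs_le_of_selfnorm H hH n
    rwa [show normalizer (H : Set _) = H from hH]
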